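/- arXiv:2009.02821 — 2 statements merged into one kernel-verified Lean document; each statement's English description precedes it below -/
import Mathlib

section
/- Let n ≥ 2, ℓ > 0, let Q ⊂ ℝ^{n−1} be a bounded open set, let p ≥ 2, and let W : ℝ → ℝ be C¹ with |W'(v)| ≤ C₁·p·|v|^{p−1} + C₃' for all v ∈ ℝ, where C₁ > 0 and C₃' ∈ ℝ. Set Ω := Q × (−ℓ, ℓ) ⊂ ℝⁿ and q := max{2, p−1}. Suppose u_k : ℝⁿ → ℝ are C² functions and u* ∈ L^q(Ω) is measurable, with u_k → u* almost everywhere on Ω, ∫_Ω |u_k − u*|^q → 0, and ‖−∂²u_k/∂z² + W'(u_k)‖_{L²(Ω)} → 0 as k → ∞. Then for every C² function φ : ℝⁿ → ℝ with compact support contained in Ω, ∫_Ω ( −u*·(∂²φ/∂z²) + W'(u*)·φ ) ds dz = 0; that is, u* is a distributional solution of the bilayer equation ∂²u/∂z² = W'(u) on Ω. -/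
open MeasureTheory Filter

/-- Normal partial derivative `∂u/∂z` in the product coordinates `(s, z)`. -/
noncomputable def pdz {m : ℕ} (u : (Fin m → ℝ) × ℝ → ℝ) (x : (Fin m → ℝ) × ℝ) : ℝ :=
  fderiv ℝ u x (0, 1)

/-- The `L²` norm of `g` over a set `Ω`. -/
noncomputable def l2norm {m : ℕ} (Ω : Set ((Fin m → ℝ) × ℝ)) (g : (Fin m → ℝ) × ℝ → ℝ) : ℝ :=
  Real.sqrt (∫ x in Ω, (g x) ^ 2)

section helpers
variable {m : ℕ}

lemma pdz_eta (g : (Fin m → ℝ) × ℝ → ℝ) : (fun y => pdz g y) = pdz g := rfl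

lemma pdz_eq_zero_of_nmem_tsupport {u : (Fin m → ℝ) × ℝ → ℝ} {x : (Fin m → ℝ) × ℝ}
    (hx : x ∉ tsupport u) : pdz u x = 0 := by
  have h0 : u =ᶠ[nhds x] (fun _ => (0:ℝ)) := by
    filter_upwards [(isClosed_tsupport u).isOpen_compl.mem_nhds hx] with y hy
    exact image_eq_zero_of_notMem_tsupport hy
  have : fderiv ℝ u x = fderiv ℝ (fun _ => (0:ℝ)) x := h0.fderiv_eq
  simp only [pdz, this, fderiv_const]
  simp

lemma tsupport_pdz_subset (u : (Fin m → ℝ) × ℝ → ℝ) : tsupport (pdz u) ⊆ tsupport u := by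
  apply closure_minimal ?_ (isClosed_tsupport u)
  intro x hx
  by_contra hmem
  exact hx (pdz_eq_zero_of_nmem_tsupport hmem)

lemma hcs_pdz {u : (Fin m → ℝ) × ℝ → ℝ} (h : HasCompactSupport u) :
    HasCompactSupport (pdz u) :=
  h.fderiv_apply ℝ (0, 1)

lemma contDiff_pdz {u : (Fin m → ℝ) × ℝ → ℝ} (hu : ContDiff ℝ 2 u) : ContDiff ℝ 1 (pdz u) :=
  (hu.fderiv_right (by norm_num)).clm_apply contDiff_const

lemma continuous_pdz {u : (Fin m → ℝ) × ℝ → ℝ} (hu : ContDiff ℝ 1 u) : Continuous (pdz u) :=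
  (((hu.fderiv_right (m := 0) (by norm_num)).clm_apply contDiff_const)).continuous

lemma slice_hasDerivAt {u : (Fin m → ℝ) × ℝ → ℝ} (hu : Differentiable ℝ u)
    (s : Fin m → ℝ) (z : ℝ) : HasDerivAt (fun t => u (s, t)) (pdz u (s, z)) z := by
  have h1 : HasDerivAt (fun t : ℝ => ((s, t) : (Fin m → ℝ) × ℝ)) ((0 : Fin m → ℝ), (1:ℝ)) z :=
    HasDerivAt.prodMk (hasDerivAt_const z s) (hasDerivAt_id z)
  exact (hu (s, z)).hasFDerivAt.comp_hasDerivAt z h1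

lemma slice_contDiff {k : ℕ∞} {u : (Fin m → ℝ) × ℝ → ℝ} (hu : ContDiff ℝ k u) (s : Fin m → ℝ) :
    ContDiff ℝ k (fun t => u (s, t)) :=
  hu.comp (contDiff_const.prodMk contDiff_id)

lemma slice_hcs {u : (Fin m → ℝ) × ℝ → ℝ} (h : HasCompactSupport u) (s : Fin m → ℝ) :
    HasCompactSupport (fun t => u (s, t)) := by
  have hiso : Isometry (fun t : ℝ => ((s, t) : (Fin m → ℝ) × ℝ)) := by
    apply Isometry.of_dist_eq; intro a b
    rw [Prod.dist_eq]; simp [dist_nonneg]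
  exact h.comp_isClosedEmbedding hiso.isClosedEmbedding

lemma integral_deriv_zero {F : ℝ → ℝ} (hF : ContDiff ℝ 1 F) (hFc : HasCompactSupport F) :
    ∫ z, deriv F z = 0 := by
  have hi : Integrable (deriv F) :=
    (hF.continuous_deriv le_rfl).integrable_of_hasCompactSupport hFc.deriv
  have h1 := HasCompactSupport.integral_Iic_deriv_eq hF hFc 0
  have h2 := HasCompactSupport.integral_Ioi_deriv_eq hF hFc 0
  have h3 := intervalIntegral.integral_Iic_add_Ioi (b := (0:ℝ)) hi.integrableOn hi.integrableOn
  linarith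

lemma ibp_1d (f g : ℝ → ℝ) (hf : ContDiff ℝ 1 f) (hg : ContDiff ℝ 1 g)
    (hgc : HasCompactSupport g) :
    ∫ z, f z * deriv g z = - ∫ z, deriv f z * g z := by
  have hfg : ContDiff ℝ 1 (fun z => f z * g z) := hf.mul hg
  have hc : HasCompactSupport (fun z => f z * g z) := hgc.mul_left
  have h0 : ∫ z, deriv (fun z => f z * g z) z = 0 := integral_deriv_zero hfg hc
  have hder : ∀ z, deriv (fun z => f z * g z) z = deriv f z * g z + f z * deriv g z := fun z =>
    deriv_fun_mul (hf.differentiable one_ne_zero z) (hg.differentiable one_ne_zero z)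
  have hi1 : Integrable (fun z => deriv f z * g z) :=
    ((hf.continuous_deriv le_rfl).mul hg.continuous).integrable_of_hasCompactSupport hgc.mul_left
  have hi2 : Integrable (fun z => f z * deriv g z) :=
    (hf.continuous.mul (hg.continuous_deriv le_rfl)).integrable_of_hasCompactSupport
      hgc.deriv.mul_left
  simp only [hder] at h0
  rw [integral_add hi1 hi2] at h0
  linarith

lemma ibp_fiber {u φ : (Fin m → ℝ) × ℝ → ℝ} (hu : ContDiff ℝ 2 u) (hφ : ContDiff ℝ 2 φ)
    (hφc : HasCompactSupport φ) (s : Fin m → ℝ) :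
    ∫ z, u (s, z) * pdz (pdz φ) (s, z) = ∫ z, pdz (pdz u) (s, z) * φ (s, z) := by
  have hud : Differentiable ℝ u := hu.differentiable (by norm_num)
  have hφd : Differentiable ℝ φ := hφ.differentiable (by norm_num)
  have hpu : ContDiff ℝ 1 (pdz u) := contDiff_pdz hu
  have hpφ : ContDiff ℝ 1 (pdz φ) := contDiff_pdz hφ
  have e1 : ∀ z, pdz φ (s, z) = deriv (fun t => φ (s, t)) z := fun z =>
    ((slice_hasDerivAt hφd s z).deriv).symm
  have e2 : ∀ z, pdz (pdz φ) (s, z) = deriv (fun t => pdz φ (s, t)) z := fun z =>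
    ((slice_hasDerivAt (hpφ.differentiable one_ne_zero) s z).deriv).symm
  have e3 : ∀ z, deriv (fun t => u (s, t)) z = pdz u (s, z) := fun z =>
    (slice_hasDerivAt hud s z).deriv
  have e4 : ∀ z, deriv (fun t => pdz u (s, t)) z = pdz (pdz u) (s, z) := fun z =>
    (slice_hasDerivAt (hpu.differentiable one_ne_zero) s z).deriv
  calc ∫ z, u (s, z) * pdz (pdz φ) (s, z)
      = ∫ z, u (s, z) * deriv (fun t => pdz φ (s, t)) z := by simp only [e2]
    _ = - ∫ z, deriv (fun t => u (s, t)) z * pdz φ (s, z) :=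
        ibp_1d _ _ (slice_contDiff (hu.of_le one_le_two) s) (slice_contDiff hpφ s)
          (slice_hcs (hcs_pdz hφc) s)
    _ = - ∫ z, pdz u (s, z) * deriv (fun t => φ (s, t)) z := by simp only [e3, e1]
    _ = - - ∫ z, deriv (fun t => pdz u (s, t)) z * φ (s, z) := by
        rw [ibp_1d _ _ (slice_contDiff hpu s) (slice_contDiff (hφ.of_le one_le_two) s)
          (slice_hcs hφc s)]
    _ = ∫ z, pdz (pdz u) (s, z) * φ (s, z) := by rw [neg_neg]; simp only [e4]

lemma ibp {u φ : (Fin m → ℝ) × ℝ → ℝ} (hu : ContDiff ℝ 2 u) (hφ : ContDiff ℝ 2 φ)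
    (hφc : HasCompactSupport φ) :
    ∫ x, u x * pdz (pdz φ) x = ∫ x, pdz (pdz u) x * φ x := by
  have hiφ : Integrable (fun x => u x * pdz (pdz φ) x) :=
    (hu.continuous.mul (continuous_pdz (contDiff_pdz hφ))).integrable_of_hasCompactSupport
      ((hcs_pdz (hcs_pdz hφc)).mul_left)
  have hiu : Integrable (fun x => pdz (pdz u) x * φ x) :=
    ((continuous_pdz (contDiff_pdz hu)).mul hφ.continuous).integrable_of_hasCompactSupport
      (hφc.mul_left)
  rw [Measure.volume_eq_prod] at hiφ hiu
  rw [show (volume : Measure ((Fin m → ℝ) × ℝ)) = (volume : Measure (Fin m → ℝ)).prod volume from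
    Measure.volume_eq_prod _ _, integral_prod _ hiφ, integral_prod _ hiu]
  exact integral_congr_ae (Eventually.of_forall fun s => ibp_fiber hu hφ hφc s)

lemma exists_bound {f : (Fin m → ℝ) × ℝ → ℝ} (hf : Continuous f) (hc : HasCompactSupport f) :
    ∃ M, 0 ≤ M ∧ ∀ x, |f x| ≤ M := by
  obtain ⟨C, hC⟩ := hc.exists_bound_of_continuousOn hf.continuousOn
  refine ⟨max C 0, le_max_right _ _, fun x => ?_⟩
  by_cases hx : x ∈ tsupport f
  · have := hC x hx
    rw [Real.norm_eq_abs] at this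
    exact le_trans this (le_max_left _ _)
  · simp [image_eq_zero_of_notMem_tsupport hx]

end helpers

lemma key_rpow {α : Type*} [MeasurableSpace α] {μ : Measure α} [IsFiniteMeasure μ]
    (h : ℕ → α → ℝ) (hnn : ∀ k x, 0 ≤ h k x)
    {q r : ℝ} (hr : 1 ≤ r) (hrq : r ≤ q)
    (hint_q : ∀ k, Integrable (fun x => h k x ^ q) μ)
    (hint_r : ∀ k, Integrable (fun x => h k x ^ r) μ)
    (hq0 : Tendsto (fun k => ∫ x, h k x ^ q ∂μ) atTop (nhds 0)) :
    Tendsto (fun k => ∫ x, h k x ^ r ∂μ) atTop (nhds 0) := by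
  rw [NormedAddCommGroup.tendsto_nhds_zero]
  intro ε hε
  set T := (μ Set.univ).toReal with hT
  have hT0 : 0 ≤ T := ENNReal.toReal_nonneg
  set δ := min 1 (ε / (2 * (T + 1))) with hδdef
  have hδ0 : 0 < δ := lt_min one_pos (by positivity)
  have hδ1 : δ ≤ 1 := min_le_left _ _
  have hδε : δ * T ≤ ε / 2 := by
    have h1 : δ ≤ ε / (2 * (T + 1)) := min_le_right _ _
    have h2 : δ * T ≤ (ε / (2 * (T + 1))) * T := mul_le_mul_of_nonneg_right h1 hT0
    have h3 : (ε / (2 * (T + 1))) * T ≤ ε / 2 := by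
      rw [div_mul_eq_mul_div, div_le_div_iff₀ (by positivity) (by norm_num)]
      nlinarith
    linarith
  have hc0 : (0:ℝ) < (ε / 2) * δ ^ (q - r) := by
    have := Real.rpow_pos_of_pos hδ0 (q - r); positivity
  filter_upwards [hq0.eventually_lt_const hc0] with k hk
  have hIq0 : 0 ≤ ∫ x, h k x ^ q ∂μ :=
    integral_nonneg fun x => Real.rpow_nonneg (hnn k x) _
  have hIr0 : 0 ≤ ∫ x, h k x ^ r ∂μ :=
    integral_nonneg fun x => Real.rpow_nonneg (hnn k x) _
  rw [Real.norm_eq_abs, abs_of_nonneg hIr0]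
  have hpt : ∀ x, h k x ^ r ≤ δ ^ r + δ ^ (r - q) * h k x ^ q := by
    intro x
    have ha0 : 0 ≤ h k x := hnn k x
    rcases le_total (h k x) δ with hle | hle
    · have h1 : h k x ^ r ≤ δ ^ r := Real.rpow_le_rpow ha0 hle (by linarith)
      have h2 : 0 ≤ δ ^ (r - q) * h k x ^ q := by
        have := Real.rpow_nonneg hδ0.le (r - q)
        have := Real.rpow_nonneg ha0 q
        positivity
      linarith
    · have ha0' : 0 < h k x := lt_of_lt_of_le hδ0 hle
      have h1 : h k x ^ (r - q) ≤ δ ^ (r - q) :=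
        Real.rpow_le_rpow_of_nonpos hδ0 hle (by linarith)
      have h2 : h k x ^ r = h k x ^ (r - q) * h k x ^ q := by
        rw [← Real.rpow_add ha0']; ring_nf
      have h3 : h k x ^ (r - q) * h k x ^ q ≤ δ ^ (r - q) * h k x ^ q :=
        mul_le_mul_of_nonneg_right h1 (Real.rpow_nonneg ha0 q)
      have h4 : 0 ≤ δ ^ r := Real.rpow_nonneg hδ0.le r
      linarith
  have hInt : ∫ x, h k x ^ r ∂μ ≤ T * δ ^ r + δ ^ (r - q) * ∫ x, h k x ^ q ∂μ := by
    have h1 : ∫ x, h k x ^ r ∂μ ≤ ∫ x, (δ ^ r + δ ^ (r - q) * h k x ^ q) ∂μ :=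
      integral_mono (hint_r k) ((integrable_const _).add ((hint_q k).const_mul _)) hpt
    rw [integral_add (integrable_const _) ((hint_q k).const_mul _), integral_const,
      integral_const_mul] at h1
    simpa [smul_eq_mul, hT, measureReal_def] using h1
  have hδr : δ ^ r ≤ δ := by
    have := Real.rpow_le_rpow_of_exponent_ge hδ0 hδ1 hr
    rwa [Real.rpow_one] at this
  have hfirst : T * δ ^ r ≤ ε / 2 := by
    have := mul_le_mul_of_nonneg_left hδr hT0
    nlinarith
  have hsecond : δ ^ (r - q) * ∫ x, h k x ^ q ∂μ < ε / 2 := by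
    have hpos : 0 < δ ^ (r - q) := Real.rpow_pos_of_pos hδ0 _
    have h5 : δ ^ (r - q) * ∫ x, h k x ^ q ∂μ < δ ^ (r - q) * ((ε / 2) * δ ^ (q - r)) :=
      mul_lt_mul_of_pos_left hk hpos
    have h6 : δ ^ (r - q) * ((ε / 2) * δ ^ (q - r)) = ε / 2 := by
      rw [show δ ^ (r - q) * ((ε / 2) * δ ^ (q - r)) = (δ ^ (r - q) * δ ^ (q - r)) * (ε / 2) by ring,
        ← Real.rpow_add hδ0]
      norm_num
    linarith
  linarith

set_option maxHeartbeats 1000000 in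
/-- the limit `u*` of an `L^q`-convergent sequence with vanishing bilayer
residual is a distributional solution of the bilayer equation `∂²u/∂z² = W'(u)`. -/
theorem stmt_16 (n : ℕ) (hn : 2 ≤ n) (ℓ : ℝ) (hℓ : 0 < ℓ)
    (Q : Set (Fin (n - 1) → ℝ)) (hQo : IsOpen Q) (hQb : Bornology.IsBounded Q)
    (p C₁ C₃' : ℝ) (hp : 2 ≤ p) (hC₁ : 0 < C₁)
    (W : ℝ → ℝ) (hW : ContDiff ℝ 1 W)
    (hW' : ∀ v : ℝ, |deriv W v| ≤ C₁ * p * |v| ^ (p - 1) + C₃')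
    (uk : ℕ → (Fin (n - 1) → ℝ) × ℝ → ℝ) (huk : ∀ k, ContDiff ℝ 2 (uk k))
    (ustar : (Fin (n - 1) → ℝ) × ℝ → ℝ) (hustar : Measurable ustar)
    (q : ℝ) (hq : q = max 2 (p - 1))
    (hLq : IntegrableOn (fun x => |ustar x| ^ q) (Q ×ˢ Set.Ioo (-ℓ) ℓ))
    (hae : ∀ᵐ x ∂(volume.restrict (Q ×ˢ Set.Ioo (-ℓ) ℓ)),
      Tendsto (fun k => uk k x) atTop (nhds (ustar x)))
    (hconv : Tendsto (fun k => ∫ x in Q ×ˢ Set.Ioo (-ℓ) ℓ, |uk k x - ustar x| ^ q)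
      atTop (nhds 0))
    (hres : Tendsto (fun k => l2norm (Q ×ˢ Set.Ioo (-ℓ) ℓ)
        (fun x => -(pdz (fun y => pdz (uk k) y) x) + deriv W (uk k x)))
      atTop (nhds 0)) :
    ∀ φ : (Fin (n - 1) → ℝ) × ℝ → ℝ, ContDiff ℝ 2 φ → HasCompactSupport φ →
      tsupport φ ⊆ Q ×ˢ Set.Ioo (-ℓ) ℓ →
      (∫ x in Q ×ˢ Set.Ioo (-ℓ) ℓ,
        (-(ustar x) * pdz (fun y => pdz φ y) x + deriv W (ustar x) * φ x)) = 0 := by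
  intro φ hφ2 hφc hφΩ
  simp only [pdz_eta] at hres ⊢
  set Ω : Set ((Fin (n - 1) → ℝ) × ℝ) := Q ×ˢ Set.Ioo (-ℓ) ℓ with hΩdef
  -- basic facts
  have hp0 : (0:ℝ) < p := by linarith
  have hp1 : (1:ℝ) ≤ p - 1 := by linarith
  have hq2 : (2:ℝ) ≤ q := hq ▸ le_max_left _ _
  have hq1 : (1:ℝ) ≤ q := by linarith
  have hq0 : (0:ℝ) < q := by linarith
  have hpq : p - 1 ≤ q := hq ▸ le_max_right _ _
  have contW : Continuous (deriv W) := hW.continuous_deriv le_rfl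
  have h2p : (0:ℝ) ≤ (2:ℝ) ^ (p - 1) := Real.rpow_nonneg (by norm_num) _
  have hΩmeas : MeasurableSet Ω := hQo.measurableSet.prod measurableSet_Ioo
  have hΩb : Bornology.IsBounded Ω := hQb.prod (Metric.isBounded_Ioo _ _)
  have hK : IsCompact (closure Ω) :=
    Metric.isCompact_of_isClosed_isBounded isClosed_closure hΩb.closure
  have hμΩ : volume Ω < ⊤ := lt_of_le_of_lt (measure_mono subset_closure) hK.measure_lt_top
  haveI : IsFiniteMeasure (volume.restrict Ω) :=
    ⟨by rw [Measure.restrict_apply_univ]; exact hμΩ⟩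
  have intOn : ∀ g : (Fin (n - 1) → ℝ) × ℝ → ℝ, Continuous g → IntegrableOn g Ω := fun g hg =>
    (hg.continuousOn.integrableOn_compact hK).mono_set subset_closure
  -- rpow helper
  have hr_le : ∀ a : ℝ, 0 ≤ a → ∀ r : ℝ, 0 < r → r ≤ q → a ^ r ≤ 1 + a ^ q := by
    intro a ha r hr hrq
    rcases le_total a 1 with h | h
    · have h1 : a ^ r ≤ 1 := Real.rpow_le_one ha h hr.le
      have h2 : 0 ≤ a ^ q := Real.rpow_nonneg ha q
      linarith
    · have h1 : a ^ r ≤ a ^ q := Real.rpow_le_rpow_of_exponent_le h hrq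
      linarith
  -- integrability of powers of ustar
  have hus_r : ∀ r : ℝ, 0 < r → r ≤ q → IntegrableOn (fun x => |ustar x| ^ r) Ω := by
    intro r hr hrq
    apply Integrable.mono' ((integrable_const (1:ℝ)).add hLq)
    · exact ((Real.continuous_rpow_const hr.le).measurable.comp
        hustar.abs).aestronglyMeasurable
    · filter_upwards with x
      rw [Real.norm_eq_abs, abs_of_nonneg (Real.rpow_nonneg (abs_nonneg _) _)]
      exact hr_le _ (abs_nonneg _) r hr hrq
  have hus1 : IntegrableOn ustar Ω := by
    apply Integrable.mono' ((integrable_const (1:ℝ)).add hLq) hustar.aestronglyMeasurable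
    filter_upwards with x
    rw [Real.norm_eq_abs]
    have := hr_le |ustar x| (abs_nonneg _) 1 one_pos hq1
    rwa [Real.rpow_one] at this
  -- bounds for φ and its second z-derivative
  obtain ⟨Mφ, hMφ0, hMφ⟩ := exists_bound hφ2.continuous hφc
  have hD2c : Continuous (pdz (pdz φ)) := continuous_pdz (contDiff_pdz hφ2)
  obtain ⟨M2, hM20, hM2⟩ := exists_bound hD2c (hcs_pdz (hcs_pdz hφc))
  -- integrability of |uk - ustar| powers
  have hk_meas : ∀ k, Measurable fun x => |uk k x - ustar x| := fun k =>
    ((huk k).continuous.measurable.sub hustar).abs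
  have hk_int : ∀ k, IntegrableOn (fun x => |uk k x - ustar x|) Ω := fun k =>
    ((intOn _ (huk k).continuous).sub hus1).abs
  have hkq_int : ∀ k, IntegrableOn (fun x => |uk k x - ustar x| ^ q) Ω := by
    intro k
    obtain ⟨M, hM⟩ := hK.exists_bound_of_continuousOn (huk k).continuous.continuousOn
    set M' := max M 0 with hM'def
    have hM'0 : 0 ≤ M' := le_max_right _ _
    apply Integrable.mono'
      (g := fun x => (2:ℝ) ^ q * (M' ^ q + |ustar x| ^ q))
      (((integrable_const _).add hLq).const_mul _)
    · exact ((Real.continuous_rpow_const hq0.le).measurable.comp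
        (hk_meas k)).aestronglyMeasurable
    · rw [ae_restrict_iff' hΩmeas]
      filter_upwards with x hx
      have hub : |uk k x| ≤ M' := by
        have := hM x (subset_closure hx)
        rw [Real.norm_eq_abs] at this
        exact le_trans this (le_max_left _ _)
      have h1 : |uk k x - ustar x| ≤ 2 * max M' |ustar x| := by
        have habs : |uk k x - ustar x| ≤ |uk k x| + |ustar x| := abs_sub _ _
        have := le_max_left M' |ustar x|
        have := le_max_right M' |ustar x|
        linarith
      have hmax0 : 0 ≤ max M' |ustar x| := le_trans hM'0 (le_max_left _ _)
      have h2 := Real.rpow_le_rpow (abs_nonneg _) h1 hq0.le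
      rw [Real.mul_rpow (by norm_num) hmax0] at h2
      have h3 : (max M' |ustar x|) ^ q ≤ M' ^ q + |ustar x| ^ q := by
        rcases le_total M' |ustar x| with h | h
        · rw [max_eq_right h]
          have := Real.rpow_nonneg hM'0 q; linarith
        · rw [max_eq_left h]
          have := Real.rpow_nonneg (abs_nonneg (ustar x)) q; linarith
      rw [Real.norm_eq_abs, abs_of_nonneg (Real.rpow_nonneg (abs_nonneg _) _)]
      calc |uk k x - ustar x| ^ q ≤ (2:ℝ) ^ q * (max M' |ustar x|) ^ q := h2
        _ ≤ (2:ℝ) ^ q * (M' ^ q + |ustar x| ^ q) :=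
            mul_le_mul_of_nonneg_left h3 (Real.rpow_nonneg (by norm_num) _)
  have hkr_int : ∀ (k : ℕ) (r : ℝ), 0 < r → r ≤ q →
      IntegrableOn (fun x => |uk k x - ustar x| ^ r) Ω := by
    intro k r hr hrq
    apply Integrable.mono' ((integrable_const (1:ℝ)).add (hkq_int k))
    · exact ((Real.continuous_rpow_const hr.le).measurable.comp
        (hk_meas k)).aestronglyMeasurable
    · filter_upwards with x
      rw [Real.norm_eq_abs, abs_of_nonneg (Real.rpow_nonneg (abs_nonneg _) _)]
      exact hr_le _ (abs_nonneg _) r hr hrq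
  -- the key convergences
  have key : ∀ r : ℝ, 1 ≤ r → r ≤ q →
      Tendsto (fun k => ∫ x in Ω, |uk k x - ustar x| ^ r) atTop (nhds 0) :=
    fun r hr hrq => key_rpow (fun k x => |uk k x - ustar x|) (fun k x => abs_nonneg _)
      hr hrq hkq_int (fun k => hkr_int k r (by linarith) hrq) hconv
  have conv_h : Tendsto (fun k => ∫ x in Ω, |uk k x - ustar x|) atTop (nhds 0) := by
    have := key 1 le_rfl hq1
    simpa [Real.rpow_one] using this
  have conv_p : Tendsto (fun k => ∫ x in Ω, |uk k x - ustar x| ^ (p - 1)) atTop (nhds 0) :=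
    key (p - 1) hp1 hpq
  -- the W' difference term
  set V : ℕ → (Fin (n - 1) → ℝ) × ℝ → ℝ :=
    fun k x => |deriv W (uk k x) - deriv W (ustar x)| * |φ x| with hVdef
  set G : (Fin (n - 1) → ℝ) × ℝ → ℝ :=
    fun x => Mφ * (C₁ * p * ((2:ℝ) ^ (p - 1) + 1) * |ustar x| ^ (p - 1) + 2 * |C₃'|) with hGdef
  set A : ℝ := Mφ * (C₁ * p * (2:ℝ) ^ (p - 1)) with hAdef
  have hA0 : 0 ≤ A := by
    rw [hAdef]
    exact mul_nonneg hMφ0 (mul_nonneg (mul_nonneg hC₁.le hp0.le) h2p)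
  have hG_nonneg : ∀ x, 0 ≤ G x := by
    intro x
    rw [hGdef]
    refine mul_nonneg hMφ0 (add_nonneg ?_ (by positivity))
    exact mul_nonneg (mul_nonneg (mul_nonneg hC₁.le hp0.le) (by linarith))
      (Real.rpow_nonneg (abs_nonneg _) _)
  have hG_meas : Measurable G := by
    rw [hGdef]
    exact (((Real.continuous_rpow_const (by linarith : (0:ℝ) ≤ p - 1)).measurable.comp
      hustar.abs).const_mul _).add_const _ |>.const_mul _
  have hG_int : IntegrableOn G Ω := by
    rw [hGdef]
    exact (((hus_r (p - 1) (by linarith) hpq).const_mul _).add (integrable_const _)).const_mul _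
  have hV_nonneg : ∀ k x, 0 ≤ V k x := fun k x =>
    mul_nonneg (abs_nonneg _) (abs_nonneg _)
  have hV_meas : ∀ k, Measurable (V k) := by
    intro k
    rw [hVdef]
    exact (((contW.comp (huk k).continuous).measurable.sub
      (contW.measurable.comp hustar)).abs).mul hφ2.continuous.measurable.abs
  have hV_bound : ∀ k x, V k x ≤ A * |uk k x - ustar x| ^ (p - 1) + G x := by
    intro k x
    have h1 := hW' (uk k x)
    have h2 := hW' (ustar x)
    have h3 : |uk k x| ^ (p - 1) ≤
        (2:ℝ) ^ (p - 1) * (|uk k x - ustar x| ^ (p - 1) + |ustar x| ^ (p - 1)) := by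
      have hb : |uk k x| ≤ 2 * max |uk k x - ustar x| |ustar x| := by
        have habs : |uk k x| ≤ |uk k x - ustar x| + |ustar x| := by
          have := abs_add_le (uk k x - ustar x) (ustar x)
          simpa using this
        have := le_max_left |uk k x - ustar x| |ustar x|
        have := le_max_right |uk k x - ustar x| |ustar x|
        linarith
      have hmax0 : 0 ≤ max |uk k x - ustar x| |ustar x| :=
        le_trans (abs_nonneg _) (le_max_left _ _)
      have h4 := Real.rpow_le_rpow (abs_nonneg _) hb (by linarith : (0:ℝ) ≤ p - 1)
      rw [Real.mul_rpow (by norm_num) hmax0] at h4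
      have h5 : (max |uk k x - ustar x| |ustar x|) ^ (p - 1) ≤
          |uk k x - ustar x| ^ (p - 1) + |ustar x| ^ (p - 1) := by
        rcases le_total |uk k x - ustar x| |ustar x| with h | h
        · rw [max_eq_right h]
          have := Real.rpow_nonneg (abs_nonneg (uk k x - ustar x)) (p - 1); linarith
        · rw [max_eq_left h]
          have := Real.rpow_nonneg (abs_nonneg (ustar x)) (p - 1); linarith
      exact le_trans h4 (mul_le_mul_of_nonneg_left h5 h2p)
    have step1 : V k x ≤ (|deriv W (uk k x)| + |deriv W (ustar x)|) * Mφ := by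
      rw [hVdef]
      exact mul_le_mul (abs_sub _ _) (hMφ x) (abs_nonneg _)
        (add_nonneg (abs_nonneg _) (abs_nonneg _))
    have h3' : C₁ * p * |uk k x| ^ (p - 1) ≤
        C₁ * p * ((2:ℝ) ^ (p - 1) * (|uk k x - ustar x| ^ (p - 1) + |ustar x| ^ (p - 1))) :=
      mul_le_mul_of_nonneg_left h3 (mul_nonneg hC₁.le hp0.le)
    have step2 : |deriv W (uk k x)| + |deriv W (ustar x)| ≤
        C₁ * p * ((2:ℝ) ^ (p - 1) * (|uk k x - ustar x| ^ (p - 1) + |ustar x| ^ (p - 1)))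
          + C₁ * p * |ustar x| ^ (p - 1) + 2 * |C₃'| := by
      have := le_abs_self C₃'
      linarith
    have step3 : V k x ≤
        (C₁ * p * ((2:ℝ) ^ (p - 1) * (|uk k x - ustar x| ^ (p - 1) + |ustar x| ^ (p - 1)))
          + C₁ * p * |ustar x| ^ (p - 1) + 2 * |C₃'|) * Mφ :=
      le_trans step1 (mul_le_mul_of_nonneg_right step2 hMφ0)
    refine le_trans step3 (le_of_eq ?_)
    rw [hAdef, hGdef]
    ring
  -- a.e. convergence of V to 0
  have hV_tendsto : ∀ᵐ x ∂(volume.restrict Ω), Tendsto (fun k => V k x) atTop (nhds 0) := by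
    filter_upwards [hae] with x hx
    have h1 : Tendsto (fun k => deriv W (uk k x)) atTop (nhds (deriv W (ustar x))) :=
      (contW.tendsto _).comp hx
    have h2 : Tendsto (fun k => V k x) atTop
        (nhds (|deriv W (ustar x) - deriv W (ustar x)| * |φ x|)) := by
      rw [hVdef]
      exact ((h1.sub tendsto_const_nhds).abs).mul tendsto_const_nhds
    simpa using h2
  -- min (V k) G is integrable
  have hmin_int : ∀ k, Integrable (fun x => min (V k x) (G x)) (volume.restrict Ω) := by
    intro k
    apply Integrable.mono' hG_int ((hV_meas k).min hG_meas).aestronglyMeasurable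
    filter_upwards with x
    rw [Real.norm_eq_abs, abs_of_nonneg (le_min (hV_nonneg k x) (hG_nonneg x))]
    exact min_le_right _ _
  -- DCT for the min
  have hmin_tendsto : Tendsto (fun k => ∫ x in Ω, min (V k x) (G x)) atTop (nhds 0) := by
    have := tendsto_integral_of_dominated_convergence (μ := volume.restrict Ω)
      (F := fun k x => min (V k x) (G x)) (f := fun _ => (0:ℝ)) G
      (fun k => ((hV_meas k).min hG_meas).aestronglyMeasurable) hG_int
      (fun k => by
        filter_upwards with x
        rw [Real.norm_eq_abs, abs_of_nonneg (le_min (hV_nonneg k x) (hG_nonneg x))]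
        exact min_le_right _ _)
      (by
        filter_upwards [hV_tendsto] with x hx
        have := hx.min (tendsto_const_nhds (x := G x))
        simpa [min_eq_left (hG_nonneg x)] using this)
    simpa using this
  -- V k is integrable
  have hWuφ_int : IntegrableOn (fun x => deriv W (ustar x) * φ x) Ω := by
    apply Integrable.mono'
      (g := fun x => (C₁ * p * |ustar x| ^ (p - 1) + |C₃'|) * Mφ)
      (((((hus_r (p - 1) (by linarith) hpq).const_mul _).add
        (integrable_const _))).mul_const _)
    · exact ((contW.measurable.comp hustar).mul hφ2.continuous.measurable).aestronglyMeasurable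
    · filter_upwards with x
      rw [Real.norm_eq_abs, abs_mul]
      refine mul_le_mul ?_ (hMφ x) (abs_nonneg _) ?_
      · have := hW' (ustar x)
        have := le_abs_self C₃'
        linarith
      · exact add_nonneg (mul_nonneg (mul_nonneg hC₁.le hp0.le)
          (Real.rpow_nonneg (abs_nonneg _) _)) (abs_nonneg _)
  have hV_int : ∀ k, Integrable (V k) (volume.restrict Ω) := by
    intro k
    have heq : V k = fun x => |deriv W (uk k x) * φ x - deriv W (ustar x) * φ x| := by
      funext x
      simp only [hVdef]
      rw [← abs_mul]
      congr 1
      ring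
    rw [heq]
    exact ((intOn _ ((contW.comp (huk k).continuous).mul hφ2.continuous)).sub hWuφ_int).abs
  -- ∫ V k → 0
  have hV_conv : Tendsto (fun k => ∫ x in Ω, V k x) atTop (nhds 0) := by
    apply squeeze_zero (fun k => integral_nonneg (fun x => hV_nonneg k x))
      (g := fun k => (∫ x in Ω, min (V k x) (G x)) + A * ∫ x in Ω, |uk k x - ustar x| ^ (p - 1))
    · intro k
      have hpt : ∀ x, V k x ≤ min (V k x) (G x) + A * |uk k x - ustar x| ^ (p - 1) := by
        intro x
        have hnn : 0 ≤ A * |uk k x - ustar x| ^ (p - 1) :=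
          mul_nonneg hA0 (Real.rpow_nonneg (abs_nonneg _) _)
        rcases le_total (V k x) (G x) with h | h
        · rw [min_eq_left h]; linarith
        · rw [min_eq_right h]
          have := hV_bound k x
          linarith
      calc ∫ x in Ω, V k x
          ≤ ∫ x in Ω, (min (V k x) (G x) + A * |uk k x - ustar x| ^ (p - 1)) :=
            integral_mono (hV_int k)
              ((hmin_int k).add ((hkr_int k (p - 1) (by linarith) hpq).const_mul A)) hpt
        _ = (∫ x in Ω, min (V k x) (G x)) + A * ∫ x in Ω, |uk k x - ustar x| ^ (p - 1) := by
            rw [integral_add (hmin_int k) ((hkr_int k (p - 1) (by linarith) hpq).const_mul A),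
              integral_const_mul]
    · simpa using hmin_tendsto.add (conv_p.const_mul A)
  -- integrability of the limit integrand
  have huD2_int : IntegrableOn (fun x => ustar x * pdz (pdz φ) x) Ω := by
    apply Integrable.mono' (hus1.abs.const_mul M2)
      ((hustar.mul hD2c.measurable).aestronglyMeasurable)
    filter_upwards with x
    rw [Real.norm_eq_abs, Pi.mul_apply, abs_mul]
    calc |ustar x| * |pdz (pdz φ) x| ≤ |ustar x| * M2 :=
          mul_le_mul_of_nonneg_left (hM2 x) (abs_nonneg _)
      _ = M2 * |ustar x| := mul_comm _ _
  have hL1 : IntegrableOn (fun x => -(ustar x) * pdz (pdz φ) x + deriv W (ustar x) * φ x) Ω := by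
    have h1 : (fun x => -(ustar x) * pdz (pdz φ) x) = fun x => -(ustar x * pdz (pdz φ) x) := by
      funext x; ring
    refine Integrable.add ?_ hWuφ_int
    rw [h1]
    exact huD2_int.neg
  -- claim 1 : the integrals converge to the limit integral
  have hak_int : ∀ k, IntegrableOn
      (fun x => -(uk k x) * pdz (pdz φ) x + deriv W (uk k x) * φ x) Ω := fun k =>
    intOn _ (((huk k).continuous.neg.mul hD2c).add
      ((contW.comp (huk k).continuous).mul hφ2.continuous))
  have hdiff : ∀ k,
      |(∫ x in Ω, (-(uk k x) * pdz (pdz φ) x + deriv W (uk k x) * φ x)) -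
        ∫ x in Ω, (-(ustar x) * pdz (pdz φ) x + deriv W (ustar x) * φ x)| ≤
      M2 * (∫ x in Ω, |uk k x - ustar x|) + ∫ x in Ω, V k x := by
    intro k
    rw [← integral_sub (hak_int k) hL1]
    have habs : |∫ x in Ω, ((-(uk k x) * pdz (pdz φ) x + deriv W (uk k x) * φ x) -
        (-(ustar x) * pdz (pdz φ) x + deriv W (ustar x) * φ x))| ≤
        ∫ x in Ω, |(-(uk k x) * pdz (pdz φ) x + deriv W (uk k x) * φ x) -
        (-(ustar x) * pdz (pdz φ) x + deriv W (ustar x) * φ x)| := by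
      simpa [Real.norm_eq_abs] using norm_integral_le_integral_norm (μ := volume.restrict Ω)
        (fun x => (-(uk k x) * pdz (pdz φ) x + deriv W (uk k x) * φ x) -
        (-(ustar x) * pdz (pdz φ) x + deriv W (ustar x) * φ x))
    refine le_trans habs ?_
    have hptw : ∀ x, |(-(uk k x) * pdz (pdz φ) x + deriv W (uk k x) * φ x) -
        (-(ustar x) * pdz (pdz φ) x + deriv W (ustar x) * φ x)| ≤
        M2 * |uk k x - ustar x| + V k x := by
      intro x
      have e0 : (-(uk k x) * pdz (pdz φ) x + deriv W (uk k x) * φ x) -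
          (-(ustar x) * pdz (pdz φ) x + deriv W (ustar x) * φ x) =
          (ustar x - uk k x) * pdz (pdz φ) x +
            (deriv W (uk k x) - deriv W (ustar x)) * φ x := by ring
      rw [e0]
      refine le_trans (abs_add_le _ _) ?_
      rw [abs_mul, abs_mul]
      have h1 : |ustar x - uk k x| * |pdz (pdz φ) x| ≤ M2 * |uk k x - ustar x| := by
        rw [abs_sub_comm]
        calc |uk k x - ustar x| * |pdz (pdz φ) x| ≤ |uk k x - ustar x| * M2 :=
              mul_le_mul_of_nonneg_left (hM2 x) (abs_nonneg _)
          _ = M2 * |uk k x - ustar x| := mul_comm _ _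
      have h2 : |deriv W (uk k x) - deriv W (ustar x)| * |φ x| = V k x := rfl
      linarith
    calc ∫ x in Ω, |(-(uk k x) * pdz (pdz φ) x + deriv W (uk k x) * φ x) -
          (-(ustar x) * pdz (pdz φ) x + deriv W (ustar x) * φ x)|
        ≤ ∫ x in Ω, (M2 * |uk k x - ustar x| + V k x) :=
          integral_mono ((hak_int k).sub hL1).abs
            (((hk_int k).const_mul M2).add (hV_int k)) hptw
      _ = M2 * (∫ x in Ω, |uk k x - ustar x|) + ∫ x in Ω, V k x := by
          rw [integral_add ((hk_int k).const_mul M2) (hV_int k), integral_const_mul]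
  have claim1 : Tendsto
      (fun k => ∫ x in Ω, (-(uk k x) * pdz (pdz φ) x + deriv W (uk k x) * φ x)) atTop
      (nhds (∫ x in Ω, (-(ustar x) * pdz (pdz φ) x + deriv W (ustar x) * φ x))) := by
    rw [tendsto_iff_dist_tendsto_zero]
    simp only [Real.dist_eq]
    apply squeeze_zero (fun k => abs_nonneg _) hdiff
    simpa using (conv_h.const_mul M2).add hV_conv
  -- claim 2 : the integrals converge to 0
  have hR0 : ∀ k, (0:ℝ) ≤ ∫ x in Ω, (-(pdz (pdz (uk k)) x) + deriv W (uk k x)) ^ 2 := fun k =>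
    integral_nonneg fun x => sq_nonneg _
  have hRconv : Tendsto
      (fun k => ∫ x in Ω, (-(pdz (pdz (uk k)) x) + deriv W (uk k x)) ^ 2) atTop (nhds 0) := by
    have h1 := hres.mul hres
    have h2 : ∀ k, l2norm Ω (fun x => -(pdz (pdz (uk k)) x) + deriv W (uk k x)) *
        l2norm Ω (fun x => -(pdz (pdz (uk k)) x) + deriv W (uk k x)) =
        ∫ x in Ω, (-(pdz (pdz (uk k)) x) + deriv W (uk k x)) ^ 2 := fun k =>
      Real.mul_self_sqrt (hR0 k)
    simp only [h2] at h1
    simpa using h1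
  have ha_eq : ∀ k, (∫ x in Ω, (-(uk k x) * pdz (pdz φ) x + deriv W (uk k x) * φ x)) =
      ∫ x in Ω, (-(pdz (pdz (uk k)) x) + deriv W (uk k x)) * φ x := by
    intro k
    have c1 : Continuous fun x => uk k x * pdz (pdz φ) x := (huk k).continuous.mul hD2c
    have cD2u : Continuous (pdz (pdz (uk k))) := continuous_pdz (contDiff_pdz (huk k))
    have c2 : Continuous fun x => deriv W (uk k x) * φ x :=
      (contW.comp (huk k).continuous).mul hφ2.continuous
    have e1 : ∫ x in Ω, uk k x * pdz (pdz φ) x = ∫ x in Ω, pdz (pdz (uk k)) x * φ x := by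
      have t1 : ∫ x in Ω, uk k x * pdz (pdz φ) x = ∫ x, uk k x * pdz (pdz φ) x :=
        setIntegral_eq_integral_of_forall_compl_eq_zero (fun x hx => by
          have hns : x ∉ tsupport (pdz (pdz φ)) := fun hmem =>
            hx (hφΩ (tsupport_pdz_subset _ (tsupport_pdz_subset _ hmem)))
          rw [image_eq_zero_of_notMem_tsupport hns, mul_zero])
      have t2 : ∫ x in Ω, pdz (pdz (uk k)) x * φ x = ∫ x, pdz (pdz (uk k)) x * φ x :=
        setIntegral_eq_integral_of_forall_compl_eq_zero (fun x hx => by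
          rw [image_eq_zero_of_notMem_tsupport (fun hmem => hx (hφΩ hmem)), mul_zero])
      rw [t1, t2]
      exact ibp (huk k) hφ2 hφc
    calc (∫ x in Ω, (-(uk k x) * pdz (pdz φ) x + deriv W (uk k x) * φ x))
        = (∫ x in Ω, -(uk k x * pdz (pdz φ) x)) + ∫ x in Ω, deriv W (uk k x) * φ x := by
          rw [← integral_add (f := fun x => -(uk k x * pdz (pdz φ) x)) (intOn _ c1.neg) (intOn _ c2)]
          exact integral_congr_ae (Eventually.of_forall fun x => by ring)
      _ = -(∫ x in Ω, uk k x * pdz (pdz φ) x) + ∫ x in Ω, deriv W (uk k x) * φ x := by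
          rw [integral_neg]
      _ = -(∫ x in Ω, pdz (pdz (uk k)) x * φ x) + ∫ x in Ω, deriv W (uk k x) * φ x := by
          rw [e1]
      _ = (∫ x in Ω, -(pdz (pdz (uk k)) x * φ x)) + ∫ x in Ω, deriv W (uk k x) * φ x := by
          rw [integral_neg]
      _ = ∫ x in Ω, (-(pdz (pdz (uk k)) x) + deriv W (uk k x)) * φ x := by
          rw [← integral_add (f := fun x => -(pdz (pdz (uk k)) x * φ x)) (intOn _ (cD2u.mul hφ2.continuous).neg) (intOn _ c2)]
          exact integral_congr_ae (Eventually.of_forall fun x => by ring)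
  have claim2 : Tendsto
      (fun k => ∫ x in Ω, (-(uk k x) * pdz (pdz φ) x + deriv W (uk k x) * φ x)) atTop
      (nhds 0) := by
    have hΦ0 : (0:ℝ) ≤ ∫ x in Ω, φ x ^ 2 := integral_nonneg fun x => sq_nonneg _
    set Φ := ∫ x in Ω, φ x ^ 2 with hΦdef
    rw [NormedAddCommGroup.tendsto_nhds_zero]
    intro ε hε
    set e := ε / (Φ + 1) with hedef
    have he : 0 < e := by rw [hedef]; positivity
    have heΦ : e * (Φ + 1) = ε := by rw [hedef]; field_simp
    filter_upwards [hRconv.eventually_lt_const (show (0:ℝ) < e * ε by positivity)] with k hk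
    rw [Real.norm_eq_abs, ha_eq k]
    have hrkc : Continuous fun x => -(pdz (pdz (uk k)) x) + deriv W (uk k x) :=
      (continuous_pdz (contDiff_pdz (huk k))).neg.add (contW.comp (huk k).continuous)
    have hint1 : IntegrableOn
        (fun x => |(-(pdz (pdz (uk k)) x) + deriv W (uk k x)) * φ x| * (2 * e)) Ω :=
      ((intOn _ (hrkc.mul hφ2.continuous)).abs).mul_const _
    have hint1' : IntegrableOn
        (fun x => |(-(pdz (pdz (uk k)) x) + deriv W (uk k x)) * φ x|) Ω :=
      (intOn _ (hrkc.mul hφ2.continuous)).abs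
    have hint2 : IntegrableOn
        (fun x => (-(pdz (pdz (uk k)) x) + deriv W (uk k x)) ^ 2 + e ^ 2 * φ x ^ 2) Ω :=
      (intOn _ (hrkc.pow 2)).add ((intOn _ (hφ2.continuous.pow 2)).const_mul _)
    have hptw : ∀ x, |(-(pdz (pdz (uk k)) x) + deriv W (uk k x)) * φ x| * (2 * e) ≤
        (-(pdz (pdz (uk k)) x) + deriv W (uk k x)) ^ 2 + e ^ 2 * φ x ^ 2 := by
      intro x
      have h1 : |(-(pdz (pdz (uk k)) x) + deriv W (uk k x)) * φ x| =
          |(-(pdz (pdz (uk k)) x) + deriv W (uk k x))| * |φ x| := abs_mul _ _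
      nlinarith [sq_nonneg (|(-(pdz (pdz (uk k)) x) + deriv W (uk k x))| - e * |φ x|),
        abs_nonneg ((-(pdz (pdz (uk k)) x) + deriv W (uk k x))), abs_nonneg (φ x),
        sq_abs ((-(pdz (pdz (uk k)) x) + deriv W (uk k x))), sq_abs (φ x), he]
    have hmono := integral_mono hint1 hint2 hptw
    rw [integral_mul_const, integral_add (f := fun x => (-(pdz (pdz (uk k)) x) + deriv W (uk k x)) ^ 2)
      (g := fun x => e ^ 2 * φ x ^ 2) (intOn _ (hrkc.pow 2))
      ((intOn _ (hφ2.continuous.pow 2)).const_mul _), integral_const_mul] at hmono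
    have habs : |∫ x in Ω, (-(pdz (pdz (uk k)) x) + deriv W (uk k x)) * φ x| ≤
        ∫ x in Ω, |(-(pdz (pdz (uk k)) x) + deriv W (uk k x)) * φ x| := by
      simpa only [Real.norm_eq_abs] using norm_integral_le_integral_norm
        (μ := volume.restrict Ω)
        (fun x => (-(pdz (pdz (uk k)) x) + deriv W (uk k x)) * φ x)
    have hfin : |∫ x in Ω, (-(pdz (pdz (uk k)) x) + deriv W (uk k x)) * φ x| * (2 * e) <
        ε * (2 * e) := by
      have hmul := mul_le_mul_of_nonneg_right habs (by positivity : (0:ℝ) ≤ 2 * e)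
      nlinarith [hmul, hmono, hk, heΦ, he, hΦ0, sq_nonneg e]
    exact lt_of_mul_lt_mul_right hfin (by positivity)
  exact tendsto_nhds_unique claim1 claim2
end

section
/- Let n ≥ 2, κ₀ > 0, ℓ > 0, η₁, η₂ ∈ ℝ, let Q ⊂ ℝ^{n−1} be a bounded open set, and let κ₁, …, κ_{n−1} : Q → ℝ be C¹ functions with |κ_j(s)| ≤ κ₀ and |∂κ_j/∂s_i(s)| ≤ κ₀ for all s ∈ Q and all i, j. Let W : ℝ → ℝ be C¹ with W(0) = 0, and let U : ℝ → ℝ be C² with support contained in (−ℓ, ℓ), satisfying the bilayer profile equation U''(z) = W'(U(z)) for all z ∈ ℝ. Define u : ℝ^{n−1}×ℝ → ℝ by u(s, z) := U(z), and set a := (1/2)·∫_{−ℓ}^{ℓ} U'(z)² dz, b := ∫_{−ℓ}^{ℓ} W(U(z)) dz. Then a = b and lim_{ε→0⁺} F̃_ε^ℓ(u) = a·∫_Q H₀(s)² ds − (η₁ + η₂)·b·|Q|, where H₀(s) := Σ_{j=1}^{n−1} κ_j(s) and |Q| is the Lebesgue measure of Q. -/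
open MeasureTheory Filter intervalIntegral

/-- Tangential partial derivative `∂u/∂s_j` in the product coordinates `(s, z)`. -/
noncomputable def pds {m : ℕ} (j : Fin m) (u : (Fin m → ℝ) × ℝ → ℝ)
    (x : (Fin m → ℝ) × ℝ) : ℝ :=
  fderiv ℝ u x (Pi.single j 1, 0)

/-- The squared scaled gradient `|D̃u|²`. -/
noncomputable def DtilSq {m : ℕ} (ε : ℝ) (κ : Fin m → (Fin m → ℝ) → ℝ)
    (u : (Fin m → ℝ) × ℝ → ℝ) (x : (Fin m → ℝ) × ℝ) : ℝ :=
  (∑ j, ((1 + ε * x.2 * κ j x.1)⁻¹) ^ 2 * (pds j u x) ^ 2) + (ε⁻¹) ^ 2 * (pdz u x) ^ 2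

/-- The scaled Laplacian `Δ̃u` in the curvilinear coordinates `(s, z)`. -/
noncomputable def lapTil {m : ℕ} (ε : ℝ) (κ : Fin m → (Fin m → ℝ) → ℝ)
    (u : (Fin m → ℝ) × ℝ → ℝ) (x : (Fin m → ℝ) × ℝ) : ℝ :=
  (∑ j, ((1 + ε * x.2 * κ j x.1)⁻¹) ^ 2 * pds j (fun y => pds j u y) x)
    + ε⁻¹ * ∑ j, κ j x.1 * (1 + ε * x.2 * κ j x.1)⁻¹ * pdz u x
    + (ε⁻¹) ^ 2 * pdz (fun y => pdz u y) x
    - ε * ∑ j, (fderiv ℝ (κ j) x.1 (Pi.single j 1)) * ((1 + ε * x.2 * κ j x.1)⁻¹) ^ 3 * pds j u x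

/-- The rescaled Functionalized Cahn–Hilliard energy `F̃_ε^ℓ` over `Q × (−ℓ, ℓ)`,
with Jacobian `J(s,z) = Π_j (1 + ε z κ_j(s))`. -/
noncomputable def Ftil {m : ℕ} (ε η₁ η₂ ℓ : ℝ) (κ : Fin m → (Fin m → ℝ) → ℝ)
    (W : ℝ → ℝ) (Q : Set (Fin m → ℝ)) (u : (Fin m → ℝ) × ℝ → ℝ) : ℝ :=
  ∫ x in Q ×ˢ Set.Ioo (-ℓ) ℓ,
    ((1 / 2) * (-(ε * lapTil ε κ u x) + ε⁻¹ * deriv W (u x)) ^ 2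
      - (η₁ * ε ^ 2 / 2) * DtilSq ε κ u x - η₂ * W (u x))
      * (∏ j, (1 + ε * x.2 * κ j x.1))

/-! ### Auxiliary lemmas -/

lemma fderiv_comp_snd {m : ℕ} {U : ℝ → ℝ} (hU : Differentiable ℝ U) (x : (Fin m → ℝ) × ℝ)
    (v : Fin m → ℝ) (w : ℝ) :
    fderiv ℝ (fun p : (Fin m → ℝ) × ℝ => U p.2) x (v, w) = deriv U x.2 * w := by
  have h : HasFDerivAt (fun p : (Fin m → ℝ) × ℝ => U p.2)
      ((deriv U x.2) • (ContinuousLinearMap.snd ℝ (Fin m → ℝ) ℝ)) x :=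
    (hU x.2).hasDerivAt.comp_hasFDerivAt x hasFDerivAt_snd
  rw [h.fderiv]
  simp [smul_eq_mul]

lemma pds_eq_zero {m : ℕ} {U : ℝ → ℝ} (hU : Differentiable ℝ U) (j : Fin m)
    (x : (Fin m → ℝ) × ℝ) : pds j (fun p : (Fin m → ℝ) × ℝ => U p.2) x = 0 := by
  simp [pds, fderiv_comp_snd hU]

lemma pdz_eq {m : ℕ} {U : ℝ → ℝ} (hU : Differentiable ℝ U)
    (x : (Fin m → ℝ) × ℝ) : pdz (fun p : (Fin m → ℝ) × ℝ => U p.2) x = deriv U x.2 := by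
  simp [pdz, fderiv_comp_snd hU]

lemma pds_pds_eq_zero {m : ℕ} {U : ℝ → ℝ} (hU : Differentiable ℝ U) (j : Fin m)
    (x : (Fin m → ℝ) × ℝ) :
    pds j (fun y => pds j (fun p : (Fin m → ℝ) × ℝ => U p.2) y) x = 0 := by
  have h : (fun y => pds j (fun p : (Fin m → ℝ) × ℝ => U p.2) y) = fun _ => (0:ℝ) :=
    funext (pds_eq_zero hU j)
  rw [h]
  simp [pds]

lemma pdz_pdz_eq {m : ℕ} {U : ℝ → ℝ} (hU : Differentiable ℝ U)
    (hU' : Differentiable ℝ (deriv U)) (x : (Fin m → ℝ) × ℝ) :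
    pdz (fun y => pdz (fun p : (Fin m → ℝ) × ℝ => U p.2) y) x = deriv (deriv U) x.2 := by
  have h : (fun y => pdz (fun p : (Fin m → ℝ) × ℝ => U p.2) y)
      = fun p : (Fin m → ℝ) × ℝ => deriv U p.2 := funext (pdz_eq hU)
  rw [h, pdz_eq hU' x]

lemma pds_const {m : ℕ} (j : Fin m) (c : ℝ) (x : (Fin m → ℝ) × ℝ) :
    pds j (fun _ => c) x = 0 := by simp [pds]

/-- The simplified integrand for the flat bilayer configuration. -/
noncomputable def gAux {m : ℕ} (η₁ η₂ : ℝ) (κ : Fin m → (Fin m → ℝ) → ℝ)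
    (V G : ℝ → ℝ) (ε : ℝ) (x : (Fin m → ℝ) × ℝ) : ℝ :=
  ((1/2) * (∑ j, κ j x.1 * (1 + ε * x.2 * κ j x.1)⁻¹)^2 * (V x.2)^2
    - η₁/2 * (V x.2)^2 - η₂ * G x.2) * ∏ j, (1 + ε * x.2 * κ j x.1)

lemma integrand_eq_gAux {m : ℕ} (ε η₁ η₂ : ℝ) (hε : 0 < ε) (κ : Fin m → (Fin m → ℝ) → ℝ)
    (W U : ℝ → ℝ) (hUd : Differentiable ℝ U) (hU'd : Differentiable ℝ (deriv U))
    (hODE : ∀ z : ℝ, deriv (deriv U) z = deriv W (U z)) (x : (Fin m → ℝ) × ℝ) :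
    ((1 / 2) * (-(ε * lapTil ε κ (fun x => U x.2) x) + ε⁻¹ * deriv W (U x.2)) ^ 2
      - (η₁ * ε ^ 2 / 2) * DtilSq ε κ (fun x => U x.2) x - η₂ * W (U x.2))
      * (∏ j, (1 + ε * x.2 * κ j x.1)) = gAux η₁ η₂ κ (deriv U) (fun z => W (U z)) ε x := by
  have hεne : ε ≠ 0 := ne_of_gt hε
  simp only [lapTil, DtilSq, gAux, pds_eq_zero hUd, pdz_eq hUd, pds_pds_eq_zero hUd,
    pdz_pdz_eq hUd hU'd, pdz_eq hU'd, pds_const, hODE x.2, mul_zero, zero_pow,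
    Finset.sum_const_zero, add_zero, zero_add, ne_eq, OfNat.ofNat_ne_zero,
    not_false_eq_true, mul_one]
  rw [← Finset.sum_mul]
  field_simp
  simp only [mul_right_comm ε (κ _ x.1) x.2]
  ring

lemma gAux_meas {m : ℕ} (η₁ η₂ : ℝ) (κ : Fin m → (Fin m → ℝ) → ℝ)
    (hκ : ∀ j, Continuous (κ j)) (V G : ℝ → ℝ) (hV : Continuous V) (hG : Continuous G)
    (ε : ℝ) : Measurable (gAux η₁ η₂ κ V G ε) := by
  unfold gAux
  have h1 : ∀ j : Fin m, Measurable (fun x : (Fin m → ℝ) × ℝ => 1 + ε * x.2 * κ j x.1) := by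
    intro j
    fun_prop
  apply Measurable.mul
  · apply Measurable.sub
    apply Measurable.sub
    · apply Measurable.mul
      apply Measurable.mul measurable_const
      apply Measurable.pow _ measurable_const
      apply Finset.measurable_sum
      intro j _
      exact (((hκ j).measurable.comp measurable_fst).mul (h1 j).inv)
      exact (hV.measurable.comp measurable_snd).pow measurable_const
    · exact (measurable_const.mul ((hV.measurable.comp measurable_snd).pow measurable_const))
    · exact measurable_const.mul (hG.measurable.comp measurable_snd)
  · exact Finset.measurable_prod _ fun j _ => h1 j

lemma gAux_tendsto {m : ℕ} (η₁ η₂ : ℝ) (κ : Fin m → (Fin m → ℝ) → ℝ)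
    (V G : ℝ → ℝ) (x : (Fin m → ℝ) × ℝ) :
    Tendsto (fun ε => gAux η₁ η₂ κ V G ε x) (nhdsWithin 0 (Set.Ioi (0:ℝ)))
      (nhds (gAux η₁ η₂ κ V G 0 x)) := by
  have h : ContinuousAt (fun ε => gAux η₁ η₂ κ V G ε x) 0 := by
    unfold gAux
    have h1 : ∀ j : Fin m, ContinuousAt (fun ε : ℝ => 1 + ε * x.2 * κ j x.1) 0 := by
      intro j; fun_prop
    have h2 : ∀ j : Fin m, ContinuousAt (fun ε : ℝ => (1 + ε * x.2 * κ j x.1)⁻¹) 0 := by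
      intro j
      exact (h1 j).inv₀ (by simp)
    apply ContinuousAt.mul
    · apply ContinuousAt.sub
      apply ContinuousAt.sub
      · apply ContinuousAt.mul
        apply ContinuousAt.mul continuousAt_const
        apply ContinuousAt.pow
        exact tendsto_finset_sum _ fun j _ => continuousAt_const.mul (h2 j)
        exact continuousAt_const
      · exact continuousAt_const
      · exact continuousAt_const
    · exact tendsto_finset_prod _ fun j _ => h1 j
  exact h.tendsto.mono_left nhdsWithin_le_nhds

lemma gAux_bound {m : ℕ} (η₁ η₂ κ₀ ℓ M MG : ℝ) (hκ₀ : 0 < κ₀) (hℓ : 0 < ℓ)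
    (hM : 0 ≤ M) (hMG : 0 ≤ MG)
    (κ : Fin m → (Fin m → ℝ) → ℝ) (Q : Set (Fin m → ℝ))
    (hκb : ∀ j, ∀ s ∈ Q, |κ j s| ≤ κ₀)
    (V G : ℝ → ℝ) (hV : ∀ z ∈ Set.Icc (-ℓ) ℓ, |V z| ≤ M)
    (hG : ∀ z ∈ Set.Icc (-ℓ) ℓ, |G z| ≤ MG)
    (ε : ℝ) (hε : 0 < ε) (hε' : ε ≤ (2*ℓ*κ₀)⁻¹)
    (x : (Fin m → ℝ) × ℝ) (hx : x ∈ Q ×ˢ Set.Ioo (-ℓ) ℓ) :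
    |gAux η₁ η₂ κ V G ε x| ≤
      (1/2 * ((m:ℝ)*(2*κ₀))^2 * M^2 + |η₁|/2 * M^2 + |η₂| * MG) * 2^m := by
  obtain ⟨hs, hz⟩ := hx
  simp only [Set.mem_Ioo] at hz
  have hzIcc : x.2 ∈ Set.Icc (-ℓ) ℓ := ⟨le_of_lt hz.1, le_of_lt hz.2⟩
  have hzabs : |x.2| ≤ ℓ := abs_le.mpr ⟨le_of_lt hz.1, le_of_lt hz.2⟩
  have key : ∀ j, |ε * x.2 * κ j x.1| ≤ 1/2 := by
    intro j
    have h1 : |ε * x.2 * κ j x.1| = ε * |x.2| * |κ j x.1| := by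
      rw [abs_mul, abs_mul, abs_of_pos hε]
    rw [h1]
    have h2 : ε * |x.2| * |κ j x.1| ≤ ε * ℓ * κ₀ := by
      apply mul_le_mul
      · exact mul_le_mul_of_nonneg_left hzabs (le_of_lt hε)
      · exact hκb j x.1 hs
      · exact abs_nonneg _
      · positivity
    have h3 : ε * ℓ * κ₀ ≤ 1/2 := by
      have h4 : ε * (ℓ * κ₀) ≤ (2*ℓ*κ₀)⁻¹ * (ℓ * κ₀) :=
        mul_le_mul_of_nonneg_right hε' (by positivity)
      have h5 : (2*ℓ*κ₀)⁻¹ * (ℓ * κ₀) = 1/2 := by field_simp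
      nlinarith
    linarith
  have hlow : ∀ j, 1/2 ≤ 1 + ε * x.2 * κ j x.1 := by
    intro j
    have := abs_le.mp (key j)
    linarith [this.1]
  have hup : ∀ j, 1 + ε * x.2 * κ j x.1 ≤ 3/2 := by
    intro j
    have := abs_le.mp (key j)
    linarith [this.2]
  have habs1 : ∀ j, |1 + ε * x.2 * κ j x.1| ≤ 2 := by
    intro j
    rw [abs_of_pos (by linarith [hlow j])]
    linarith [hup j]
  have hinv : ∀ j, |(1 + ε * x.2 * κ j x.1)⁻¹| ≤ 2 := by
    intro j
    rw [abs_inv, abs_of_pos (by linarith [hlow j])]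
    calc (1 + ε * x.2 * κ j x.1)⁻¹ ≤ (1/2 : ℝ)⁻¹ := by
          apply inv_anti₀ (by norm_num) (hlow j)
      _ = 2 := by norm_num
  have hprod : |∏ j, (1 + ε * x.2 * κ j x.1)| ≤ 2^m := by
    rw [Finset.abs_prod]
    calc ∏ j, |1 + ε * x.2 * κ j x.1| ≤ ∏ _j : Fin m, (2:ℝ) :=
          Finset.prod_le_prod (fun j _ => abs_nonneg _) (fun j _ => habs1 j)
      _ = 2^m := by simp
  have hsum : |∑ j, κ j x.1 * (1 + ε * x.2 * κ j x.1)⁻¹| ≤ (m:ℝ) * (2*κ₀) := by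
    calc |∑ j, κ j x.1 * (1 + ε * x.2 * κ j x.1)⁻¹|
        ≤ ∑ j, |κ j x.1 * (1 + ε * x.2 * κ j x.1)⁻¹| := Finset.abs_sum_le_sum_abs _ _
      _ ≤ ∑ _j : Fin m, 2*κ₀ := by
          apply Finset.sum_le_sum
          intro j _
          rw [abs_mul]
          calc |κ j x.1| * |(1 + ε * x.2 * κ j x.1)⁻¹| ≤ κ₀ * 2 :=
                mul_le_mul (hκb j x.1 hs) (hinv j) (abs_nonneg _) (le_of_lt hκ₀)
            _ = 2*κ₀ := by ring
      _ = (m:ℝ) * (2*κ₀) := by simp [mul_comm]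
  have hVb := hV x.2 hzIcc
  have hGb := hG x.2 hzIcc
  have hinner : |(1/2) * (∑ j, κ j x.1 * (1 + ε * x.2 * κ j x.1)⁻¹)^2 * (V x.2)^2
      - η₁/2 * (V x.2)^2 - η₂ * G x.2|
      ≤ 1/2 * ((m:ℝ)*(2*κ₀))^2 * M^2 + |η₁|/2 * M^2 + |η₂| * MG := by
    have t1 : |(1/2) * (∑ j, κ j x.1 * (1 + ε * x.2 * κ j x.1)⁻¹)^2 * (V x.2)^2|
        ≤ 1/2 * ((m:ℝ)*(2*κ₀))^2 * M^2 := by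
      rw [abs_mul, abs_mul]
      have e1 : |(∑ j, κ j x.1 * (1 + ε * x.2 * κ j x.1)⁻¹)^2|
          ≤ ((m:ℝ)*(2*κ₀))^2 := by
        rw [abs_pow]
        exact pow_le_pow_left₀ (abs_nonneg _) hsum 2
      have e2 : |(V x.2)^2| ≤ M^2 := by
        rw [abs_pow]
        exact pow_le_pow_left₀ (abs_nonneg _) hVb 2
      have : |(1/2 : ℝ)| = 1/2 := by norm_num
      rw [this]
      apply mul_le_mul
      · exact mul_le_mul_of_nonneg_left e1 (by norm_num)
      · exact e2
      · exact abs_nonneg _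
      · positivity
    have t2 : |η₁/2 * (V x.2)^2| ≤ |η₁|/2 * M^2 := by
      rw [abs_mul, abs_div]
      have : |(2:ℝ)| = 2 := by norm_num
      rw [this, abs_pow]
      apply mul_le_mul_of_nonneg_left _ (by positivity)
      exact pow_le_pow_left₀ (abs_nonneg _) hVb 2
    have t3 : |η₂ * G x.2| ≤ |η₂| * MG := by
      rw [abs_mul]
      exact mul_le_mul_of_nonneg_left hGb (abs_nonneg _)
    calc |(1/2) * (∑ j, κ j x.1 * (1 + ε * x.2 * κ j x.1)⁻¹)^2 * (V x.2)^2
        - η₁/2 * (V x.2)^2 - η₂ * G x.2|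
        ≤ |(1/2) * (∑ j, κ j x.1 * (1 + ε * x.2 * κ j x.1)⁻¹)^2 * (V x.2)^2
        - η₁/2 * (V x.2)^2| + |η₂ * G x.2| := abs_sub _ _
      _ ≤ |(1/2) * (∑ j, κ j x.1 * (1 + ε * x.2 * κ j x.1)⁻¹)^2 * (V x.2)^2|
          + |η₁/2 * (V x.2)^2| + |η₂ * G x.2| := by
          linarith [abs_sub ((1/2) * (∑ j, κ j x.1 * (1 + ε * x.2 * κ j x.1)⁻¹)^2 * (V x.2)^2)
            (η₁/2 * (V x.2)^2)]
      _ ≤ _ := by linarith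
  unfold gAux
  rw [abs_mul]
  apply mul_le_mul hinner hprod (abs_nonneg _)
  positivity

lemma gAux_zero_integral {m : ℕ} (η₁ η₂ ℓ : ℝ)
    (κ : Fin m → (Fin m → ℝ) → ℝ) (hκc : ∀ j, Continuous (κ j))
    (Q : Set (Fin m → ℝ)) (hQb : Bornology.IsBounded Q)
    (V G : ℝ → ℝ) (hV : Continuous V) (hG : Continuous G) :
    ∫ x in Q ×ˢ Set.Ioo (-ℓ) ℓ, gAux η₁ η₂ κ V G 0 x
      = (1/2) * (∫ s in Q, (∑ j, κ j s)^2) * (∫ z in Set.Ioo (-ℓ) ℓ, (V z)^2)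
        - (η₁/2) * (volume Q).toReal * (∫ z in Set.Ioo (-ℓ) ℓ, (V z)^2)
        - η₂ * (volume Q).toReal * (∫ z in Set.Ioo (-ℓ) ℓ, G z) := by
  have hH : Continuous (fun s : Fin m → ℝ => (1/2) * (∑ j, κ j s)^2) := by
    apply continuous_const.mul
    exact (continuous_finset_sum _ fun j _ => hκc j).pow 2
  have hIQ : IntegrableOn (fun s : Fin m → ℝ => (1/2) * (∑ j, κ j s)^2) Q volume := by
    have h1 : IntegrableOn (fun s : Fin m → ℝ => (1/2) * (∑ j, κ j s)^2) (closure Q) volume :=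
      hH.continuousOn.integrableOn_compact hQb.isCompact_closure
    exact h1.mono_set subset_closure
  have hQfin : volume Q < ⊤ := hQb.measure_lt_top
  have hIc1 : IntegrableOn (fun _ : Fin m → ℝ => η₁/2) Q volume :=
    integrableOn_const hQfin.ne
  have hIc2 : IntegrableOn (fun _ : Fin m → ℝ => η₂) Q volume :=
    integrableOn_const hQfin.ne
  have hIV : IntegrableOn (fun z => (V z)^2) (Set.Ioo (-ℓ) ℓ) volume :=
    (((hV.pow 2).continuousOn.integrableOn_compact isCompact_Icc).mono_set
      Set.Ioo_subset_Icc_self)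
  have hIG : IntegrableOn G (Set.Ioo (-ℓ) ℓ) volume :=
    ((hG.continuousOn.integrableOn_compact isCompact_Icc).mono_set Set.Ioo_subset_Icc_self)
  have hfun : (gAux η₁ η₂ κ V G 0) = fun x : (Fin m → ℝ) × ℝ =>
      (1/2) * (∑ j, κ j x.1)^2 * (V x.2)^2 - η₁/2 * (V x.2)^2 - η₂ * G x.2 := by
    funext x
    simp [gAux]
  have hA : Integrable (fun x : (Fin m → ℝ) × ℝ => (1/2) * (∑ j, κ j x.1)^2 * (V x.2)^2)
      ((volume.restrict Q).prod (volume.restrict (Set.Ioo (-ℓ) ℓ))) :=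
    hIQ.mul_prod hIV
  have hB : Integrable (fun x : (Fin m → ℝ) × ℝ => η₁/2 * (V x.2)^2)
      ((volume.restrict Q).prod (volume.restrict (Set.Ioo (-ℓ) ℓ))) :=
    hIc1.mul_prod hIV
  have hC : Integrable (fun x : (Fin m → ℝ) × ℝ => η₂ * G x.2)
      ((volume.restrict Q).prod (volume.restrict (Set.Ioo (-ℓ) ℓ))) :=
    hIc2.mul_prod hIG
  have hAB : Integrable (fun x : (Fin m → ℝ) × ℝ =>
      (1/2) * (∑ j, κ j x.1)^2 * (V x.2)^2 - η₁/2 * (V x.2)^2)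
      ((volume.restrict Q).prod (volume.restrict (Set.Ioo (-ℓ) ℓ))) := hA.sub hB
  have e1 : (∫ x : (Fin m → ℝ) × ℝ, (1/2) * (∑ j, κ j x.1)^2 * (V x.2)^2
        ∂((volume.restrict Q).prod (volume.restrict (Set.Ioo (-ℓ) ℓ))))
      = (∫ s in Q, (1/2) * (∑ j, κ j s)^2) * (∫ z in Set.Ioo (-ℓ) ℓ, (V z)^2) :=
    integral_prod_mul (fun s : Fin m → ℝ => (1/2) * (∑ j, κ j s)^2) (fun z => (V z)^2)
  have e2 : (∫ x : (Fin m → ℝ) × ℝ, η₁/2 * (V x.2)^2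
        ∂((volume.restrict Q).prod (volume.restrict (Set.Ioo (-ℓ) ℓ))))
      = (∫ _s in Q, (η₁/2 : ℝ)) * (∫ z in Set.Ioo (-ℓ) ℓ, (V z)^2) :=
    integral_prod_mul (fun _ : Fin m → ℝ => (η₁/2 : ℝ)) (fun z => (V z)^2)
  have e3 : (∫ x : (Fin m → ℝ) × ℝ, η₂ * G x.2
        ∂((volume.restrict Q).prod (volume.restrict (Set.Ioo (-ℓ) ℓ))))
      = (∫ _s in Q, (η₂ : ℝ)) * (∫ z in Set.Ioo (-ℓ) ℓ, G z) :=
    integral_prod_mul (fun _ : Fin m → ℝ => (η₂ : ℝ)) G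
  rw [hfun, Measure.volume_eq_prod, ← Measure.prod_restrict]
  rw [integral_sub hAB hC, integral_sub hA hB, e1, e2, e3,
    setIntegral_const, setIntegral_const, MeasureTheory.integral_const_mul]
  simp [smul_eq_mul, Measure.real]
  ring

/-- for the flat bilayer configuration `u(s,z) = U(z)`, the rescaled FCH
energy converges as `ε → 0⁺` to the codimension-one energy
`a·∫_Q H₀² ds − (η₁+η₂)·b·|Q|`, with `a = b`. -/
theorem stmt_17 (n : ℕ) (hn : 2 ≤ n) (κ₀ ℓ : ℝ) (hκ₀ : 0 < κ₀) (hℓ : 0 < ℓ)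
    (η₁ η₂ : ℝ)
    (Q : Set (Fin (n - 1) → ℝ)) (hQo : IsOpen Q) (hQb : Bornology.IsBounded Q)
    (κ : Fin (n - 1) → (Fin (n - 1) → ℝ) → ℝ) (hκ : ∀ j, ContDiff ℝ 1 (κ j))
    (hκb : ∀ j, ∀ s ∈ Q, |κ j s| ≤ κ₀)
    (hκ'b : ∀ i j, ∀ s ∈ Q, |fderiv ℝ (κ j) s (Pi.single i 1)| ≤ κ₀)
    (W : ℝ → ℝ) (hW : ContDiff ℝ 1 W) (hW0 : W 0 = 0)
    (U : ℝ → ℝ) (hU : ContDiff ℝ 2 U)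
    (hUsupp : Function.support U ⊆ Set.Ioo (-ℓ) ℓ)
    (hODE : ∀ z : ℝ, deriv (deriv U) z = deriv W (U z)) :
    (1 / 2) * (∫ z in (-ℓ)..ℓ, (deriv U z) ^ 2) = (∫ z in (-ℓ)..ℓ, W (U z)) ∧
    Tendsto (fun ε => Ftil ε η₁ η₂ ℓ κ W Q (fun x => U x.2))
      (nhdsWithin 0 (Set.Ioi (0 : ℝ)))
      (nhds (((1 / 2) * ∫ z in (-ℓ)..ℓ, (deriv U z) ^ 2)
          * (∫ s in Q, (∑ j, κ j s) ^ 2)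
        - (η₁ + η₂) * (∫ z in (-ℓ)..ℓ, W (U z)) * (volume Q).toReal)) := by
  -- basic differentiability facts
  have hUd : Differentiable ℝ U := hU.differentiable (by norm_num)
  have hU2 : ContDiff ℝ ((1 : ℕ) + 1) U := by exact_mod_cast hU
  have hcd : ContDiff ℝ 1 (deriv U) := (contDiff_succ_iff_deriv.mp hU2).2.2
  have hU'd : Differentiable ℝ (deriv U) := hcd.differentiable one_ne_zero
  have hU'c : Continuous (deriv U) := hcd.continuous
  have hWd : Differentiable ℝ W := hW.differentiable one_ne_zero
  have hGc : Continuous (fun z => W (U z)) := hW.continuous.comp hU.continuous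
  have hκc : ∀ j, Continuous (κ j) := fun j => (hκ j).continuous
  -- pointwise equipartition identity
  have key : ∀ z, (1/2) * (deriv U z)^2 = W (U z) := by
    have hd : ∀ z, HasDerivAt (fun z => (1/2) * (deriv U z)^2 - W (U z)) 0 z := by
      intro z
      have h1 : HasDerivAt (deriv U) (deriv (deriv U) z) z := (hU'd z).hasDerivAt
      have h2 : HasDerivAt (fun z => W (U z)) (deriv W (U z) * deriv U z) z :=
        (hWd (U z)).hasDerivAt.comp z (hUd z).hasDerivAt
      have h3 := ((h1.pow 2).const_mul ((1:ℝ)/2)).sub h2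
      refine h3.congr_deriv ?_
      rw [hODE z]; ring
    have hconst : ∀ x y : ℝ, (fun z => (1/2) * (deriv U z)^2 - W (U z)) x
        = (fun z => (1/2) * (deriv U z)^2 - W (U z)) y :=
      is_const_of_deriv_eq_zero (fun z => (hd z).differentiableAt) (fun z => (hd z).deriv)
    have hU0 : U (-ℓ - 1) = 0 := by
      by_contra hne
      have := hUsupp (Function.mem_support.mpr hne)
      simp only [Set.mem_Ioo] at this
      linarith [this.1]
    have hU'0 : deriv U (-ℓ - 1) = 0 := by
      have hev : U =ᶠ[nhds (-ℓ - 1)] (fun _ => 0) := by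
        have hopen : Set.Iio (-ℓ) ∈ nhds (-ℓ - 1) := isOpen_Iio.mem_nhds (by simp)
        filter_upwards [hopen] with y hy
        by_contra hne
        have := hUsupp (Function.mem_support.mpr hne)
        simp only [Set.mem_Ioo] at this
        exact absurd hy (by simp; linarith [this.1])
      rw [hev.deriv_eq]; simp
    intro z
    have := hconst z (-ℓ - 1)
    simp only at this
    rw [hU0, hU'0] at this
    simp [hW0] at this
    linarith
  -- the first conjunct
  have part1 : (1 / 2) * (∫ z in (-ℓ)..ℓ, (deriv U z) ^ 2) = (∫ z in (-ℓ)..ℓ, W (U z)) := by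
    rw [← intervalIntegral.integral_const_mul]
    exact intervalIntegral.integral_congr (fun z _ => key z)
  refine ⟨part1, ?_⟩
  -- convert interval integrals to Ioo integrals
  have hIoo : ∀ f : ℝ → ℝ, (∫ z in (-ℓ)..ℓ, f z) = ∫ z in Set.Ioo (-ℓ) ℓ, f z := by
    intro f
    rw [intervalIntegral.integral_of_le (by linarith), integral_Ioc_eq_integral_Ioo]
  -- bounds on deriv U and W ∘ U on [-ℓ, ℓ]
  obtain ⟨M₀, hM₀⟩ := isCompact_Icc.exists_bound_of_continuousOn
    (hU'c.continuousOn (s := Set.Icc (-ℓ) ℓ))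
  obtain ⟨MG₀, hMG₀⟩ := isCompact_Icc.exists_bound_of_continuousOn
    (hGc.continuousOn (s := Set.Icc (-ℓ) ℓ))
  set M := max M₀ 0 with hM
  set MG := max MG₀ 0 with hMG
  have hMnn : 0 ≤ M := le_max_right _ _
  have hMGnn : 0 ≤ MG := le_max_right _ _
  have hVb : ∀ z ∈ Set.Icc (-ℓ) ℓ, |deriv U z| ≤ M := fun z hz =>
    le_trans (by simpa using hM₀ z hz) (le_max_left _ _)
  have hGb : ∀ z ∈ Set.Icc (-ℓ) ℓ, |W (U z)| ≤ MG := fun z hz =>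
    le_trans (by simpa using hMG₀ z hz) (le_max_left _ _)
  set S := Q ×ˢ Set.Ioo (-ℓ) ℓ with hS
  have hSm : MeasurableSet S := (hQo.measurableSet).prod measurableSet_Ioo
  have hSfin : volume S < ⊤ := by
    rw [hS, Measure.volume_eq_prod, Measure.prod_prod]
    exact ENNReal.mul_lt_top hQb.measure_lt_top measure_Ioo_lt_top
  set C := (1/2 * (((n-1 : ℕ):ℝ)*(2*κ₀))^2 * M^2 + |η₁|/2 * M^2 + |η₂| * MG) * 2^(n-1) with hC
  set ε₀ := (2*ℓ*κ₀)⁻¹ with hε₀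
  have hε₀pos : 0 < ε₀ := by positivity
  -- the main convergence of integrals
  have hmain : Tendsto (fun ε => ∫ x in S, gAux η₁ η₂ κ (deriv U) (fun z => W (U z)) ε x)
      (nhdsWithin 0 (Set.Ioi (0 : ℝ)))
      (nhds (∫ x in S, gAux η₁ η₂ κ (deriv U) (fun z => W (U z)) 0 x)) := by
    apply MeasureTheory.tendsto_integral_filter_of_dominated_convergence (fun _ => C)
    · exact Eventually.of_forall fun ε =>
        (gAux_meas η₁ η₂ κ hκc (deriv U) _ hU'c hGc ε).aestronglyMeasurable
    · have hmem : Set.Ioo (0:ℝ) ε₀ ∈ nhdsWithin 0 (Set.Ioi (0:ℝ)) :=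
        Ioo_mem_nhdsGT_of_mem ⟨le_refl _, hε₀pos⟩
      filter_upwards [hmem] with ε hε
      rw [ae_restrict_iff' hSm]
      apply ae_of_all
      intro x hx
      rw [Real.norm_eq_abs]
      exact gAux_bound η₁ η₂ κ₀ ℓ M MG hκ₀ hℓ hMnn hMGnn κ Q hκb (deriv U) _ hVb hGb
        ε hε.1 (le_of_lt hε.2) x hx
    · exact integrableOn_const hSfin.ne
    · exact ae_of_all _ fun x => gAux_tendsto η₁ η₂ κ (deriv U) _ x
  -- identify the limit value
  have hval : (∫ x in S, gAux η₁ η₂ κ (deriv U) (fun z => W (U z)) 0 x)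
      = ((1 / 2) * ∫ z in (-ℓ)..ℓ, (deriv U z) ^ 2) * (∫ s in Q, (∑ j, κ j s) ^ 2)
        - (η₁ + η₂) * (∫ z in (-ℓ)..ℓ, W (U z)) * (volume Q).toReal := by
    rw [hS, gAux_zero_integral η₁ η₂ ℓ κ hκc Q hQb (deriv U) _ hU'c hGc]
    rw [hIoo (fun z => (deriv U z)^2), hIoo (fun z => W (U z))] at part1 ⊢
    linear_combination (-η₁*(volume Q).toReal) * part1
  rw [← hval]
  apply hmain.congr'
  have hmem : Set.Ioi (0:ℝ) ∈ nhdsWithin 0 (Set.Ioi (0:ℝ)) := self_mem_nhdsWithin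
  filter_upwards [hmem] with ε hε
  unfold Ftil
  rw [← hS]
  apply MeasureTheory.integral_congr_ae
  apply ae_of_all
  intro x
  exact (integrand_eq_gAux ε η₁ η₂ hε κ W U hUd hU'd hODE x).symm
end
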